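/- Fix a probability space (Ω, F, ℙ), real numbers K₁ > 0, C > 0 and a step size Δt > 0. Let f, g : ℝⁿ × [0,∞) → ℝⁿ be measurable and satisfy |f(x,t)| ≤ K₁(1+t)⁻¹|x|, ⟨x, f(x,t)⟩ ≤ −K₁(1+t)⁻¹|x|² and |g(x,t)| ≤ C(1+t)^{−K₁} for all x ∈ ℝⁿ and t ≥ 0. Let k be a nonnegative integer, let Y_k be an ℝⁿ-valued random variable with E|Y_k|² < ∞, let ΔB_k be a real Gaussian random variable with mean 0 and variance Δt that is independent of Y_k, and set Y_{k+1} = Y_k + f(Y_k, kΔt)Δt + g(Y_k, kΔt)ΔB_k. Then E|Y_{k+1}|² ≤ (1 − K₁Δt/(1 + kΔt))² E|Y_k|² + C²Δt(1 + kΔt)^{−2K₁}. -/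

import Mathlib

open MeasureTheory ProbabilityTheory Real Filter Asymptotics
open scoped NNReal ENNReal RealInnerProductSpace

lemma my_tendsto_mul_exp_top {b : ℝ} (hb : 0 < b) :
    Tendsto (fun x : ℝ => x * Real.exp (-b * x ^ 2)) atTop (nhds 0) := by
  have h1 := rpow_mul_exp_neg_mul_sq_isLittleO_exp_neg hb 1
  simp only [Real.rpow_one] at h1
  refine h1.tendsto_zero_of_tendsto (y := (0:ℝ)) ?_
  have : Tendsto (fun x : ℝ => -(1/2) * x) atTop atBot :=
    tendsto_id.const_mul_atTop_of_neg (by norm_num)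
  exact Real.tendsto_exp_atBot.comp this

lemma my_integral_sq_mul_exp {b : ℝ} (hb : 0 < b) :
    ∫ x : ℝ, x ^ 2 * Real.exp (-b * x ^ 2) = Real.sqrt (π / b) / (2 * b) := by
  have hderiv : ∀ x : ℝ, HasDerivAt (fun x : ℝ => -(2*b)⁻¹ * (x * Real.exp (-b * x ^ 2)))
      (x ^ 2 * Real.exp (-b * x ^ 2) - (2*b)⁻¹ * Real.exp (-b * x ^ 2)) x := by
    intro x
    have he : HasDerivAt (fun x : ℝ => Real.exp (-b * x ^ 2))
        (Real.exp (-b * x ^ 2) * (-b * (2 * x ^ 1))) x :=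
      ((hasDerivAt_pow 2 x).const_mul (-b)).exp
    have := ((hasDerivAt_id x).mul he).const_mul (-(2*b)⁻¹ : ℝ)
    refine this.congr_deriv ?_
    simp only [id_eq]
    have hbb : (2*b)⁻¹ * (2*b) = 1 := inv_mul_cancel₀ (by positivity)
    linear_combination (x ^ 2 * Real.exp (-b * x ^ 2)) * hbb
  have hint2 : Integrable (fun x : ℝ => x ^ 2 * Real.exp (-b * x ^ 2)) := by
    have := integrable_rpow_mul_exp_neg_mul_sq hb (s := 2) (by norm_num)
    simpa [Real.rpow_natCast] using this
  have hintE : Integrable (fun x : ℝ => Real.exp (-b * x ^ 2)) := integrable_exp_neg_mul_sq hb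
  have hintD : Integrable (fun x : ℝ =>
      x ^ 2 * Real.exp (-b * x ^ 2) - (2*b)⁻¹ * Real.exp (-b * x ^ 2)) :=
    hint2.sub (hintE.const_mul _)
  have htop : Tendsto (fun x : ℝ => -(2*b)⁻¹ * (x * Real.exp (-b * x ^ 2))) atTop (nhds 0) := by
    simpa using (my_tendsto_mul_exp_top hb).const_mul (-(2*b)⁻¹ : ℝ)
  have hbot : Tendsto (fun x : ℝ => -(2*b)⁻¹ * (x * Real.exp (-b * x ^ 2))) atBot (nhds 0) := by
    have h2 : Tendsto (fun x : ℝ => (-x) * Real.exp (-b * (-x) ^ 2)) atBot (nhds 0) :=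
      (my_tendsto_mul_exp_top hb).comp tendsto_neg_atBot_atTop
    have h3 : Tendsto (fun x : ℝ => x * Real.exp (-b * x ^ 2)) atBot (nhds 0) := by
      have := h2.neg
      simpa using this
    simpa using h3.const_mul (-(2*b)⁻¹ : ℝ)
  have hz := MeasureTheory.integral_of_hasDerivAt_of_tendsto hderiv hintD hbot htop
  rw [sub_zero] at hz
  have := integral_sub hint2 (hintE.const_mul ((2*b)⁻¹ : ℝ))
  rw [this] at hz
  rw [integral_const_mul, integral_gaussian] at hz
  have : ∫ x : ℝ, x ^ 2 * Real.exp (-b * x ^ 2) = (2*b)⁻¹ * Real.sqrt (π / b) := by linarith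
  rw [this]; exact (div_eq_inv_mul _ _).symm

lemma my_gauss_wd {v : ℝ≥0} (hv : v ≠ 0) :
    gaussianReal 0 v = volume.withDensity fun x => ((gaussianPDFReal 0 v x).toNNReal : ℝ≥0∞) := by
  rw [gaussianReal_of_var_ne_zero 0 hv]
  rfl

lemma my_pdf_eq {v : ℝ≥0} (x : ℝ) :
    gaussianPDFReal 0 v x = (Real.sqrt (2 * π * v))⁻¹ * Real.exp (-(2 * (v:ℝ))⁻¹ * x ^ 2) := by
  rw [gaussianPDFReal]
  congr 1
  rw [sub_zero, neg_div, div_eq_inv_mul, neg_mul]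

lemma my_vpos {v : ℝ≥0} (hv : v ≠ 0) : (0:ℝ) < v := by
  positivity

lemma my_integrable_id_gauss {v : ℝ≥0} (hv : v ≠ 0) :
    Integrable (fun x : ℝ => x) (gaussianReal 0 v) := by
  have hv' := my_vpos hv
  have hb : (0:ℝ) < (2 * (v:ℝ))⁻¹ := by positivity
  rw [my_gauss_wd hv,
    integrable_withDensity_iff_integrable_smul (measurable_gaussianPDFReal 0 v).real_toNNReal]
  refine ((integrable_mul_exp_neg_mul_sq hb).const_mul ((Real.sqrt (2 * π * v))⁻¹)).congr
    (Filter.Eventually.of_forall fun x => ?_)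
  show (Real.sqrt (2 * π * v))⁻¹ * (x * Real.exp (-(2 * (v:ℝ))⁻¹ * x ^ 2))
      = (gaussianPDFReal 0 v x).toNNReal • x
  rw [NNReal.smul_def, Real.coe_toNNReal _ (gaussianPDFReal_nonneg 0 v x), my_pdf_eq, smul_eq_mul]
  ring

lemma my_integrable_sq_gauss {v : ℝ≥0} (hv : v ≠ 0) :
    Integrable (fun x : ℝ => x ^ 2) (gaussianReal 0 v) := by
  have hv' := my_vpos hv
  have hb : (0:ℝ) < (2 * (v:ℝ))⁻¹ := by positivity
  have h2 : Integrable (fun x : ℝ => x ^ 2 * Real.exp (-(2 * (v:ℝ))⁻¹ * x ^ 2)) := by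
    have := integrable_rpow_mul_exp_neg_mul_sq hb (s := 2) (by norm_num)
    simpa [Real.rpow_natCast] using this
  rw [my_gauss_wd hv,
    integrable_withDensity_iff_integrable_smul (measurable_gaussianPDFReal 0 v).real_toNNReal]
  refine (h2.const_mul ((Real.sqrt (2 * π * v))⁻¹)).congr
    (Filter.Eventually.of_forall fun x => ?_)
  show (Real.sqrt (2 * π * v))⁻¹ * (x ^ 2 * Real.exp (-(2 * (v:ℝ))⁻¹ * x ^ 2))
      = (gaussianPDFReal 0 v x).toNNReal • x ^ 2
  rw [NNReal.smul_def, Real.coe_toNNReal _ (gaussianPDFReal_nonneg 0 v x), my_pdf_eq, smul_eq_mul]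
  ring

lemma my_integral_id_gauss {v : ℝ≥0} (hv : v ≠ 0) :
    ∫ x, x ∂(gaussianReal 0 v) = 0 := by
  have hmap := gaussianReal_map_const_mul (μ := 0) (v := v) (-1)
  norm_num at hmap
  have h1 : ∫ x, x ∂((gaussianReal 0 v).map (fun x : ℝ => -x)) = ∫ x, -x ∂(gaussianReal 0 v) :=
    integral_map measurable_neg.aemeasurable aestronglyMeasurable_id
  rw [hmap, integral_neg] at h1
  linarith

lemma my_integral_sq_gauss {v : ℝ≥0} (hv : v ≠ 0) :
    ∫ x, x ^ 2 ∂(gaussianReal 0 v) = v := by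
  have hv' := my_vpos hv
  have hb : (0:ℝ) < (2 * (v:ℝ))⁻¹ := by positivity
  rw [my_gauss_wd hv,
    integral_withDensity_eq_integral_smul (measurable_gaussianPDFReal 0 v).real_toNNReal]
  have hcong : ∀ x : ℝ, (gaussianPDFReal 0 v x).toNNReal • (x ^ 2)
      = (Real.sqrt (2 * π * v))⁻¹ * (x ^ 2 * Real.exp (-(2 * (v:ℝ))⁻¹ * x ^ 2)) := by
    intro x
    rw [NNReal.smul_def, Real.coe_toNNReal _ (gaussianPDFReal_nonneg 0 v x), my_pdf_eq,
      smul_eq_mul]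
    ring
  rw [integral_congr_ae (Filter.Eventually.of_forall hcong), integral_const_mul,
    my_integral_sq_mul_exp hb]
  have h1 : π / (2 * (v:ℝ))⁻¹ = 2 * π * v := by
    field_simp
  have h2 : (2:ℝ) * (2 * (v:ℝ))⁻¹ = (v:ℝ)⁻¹ := by
    field_simp
  rw [h1, h2]
  have h3 : Real.sqrt (2 * π * v) ≠ 0 := by positivity
  field_simp

/-- One-step second-moment estimate for the Euler–Maruyama method
(proof of Theorem 3.1). -/
theorem em_one_step_second_moment {Ω : Type*} [MeasurableSpace Ω]
    (P : Measure Ω) [IsProbabilityMeasure P] {n : ℕ}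
    (K₁ C Δt : ℝ) (hK₁ : 0 < K₁) (hC : 0 < C) (hΔt : 0 < Δt)
    (f g : EuclideanSpace ℝ (Fin n) → ℝ → EuclideanSpace ℝ (Fin n))
    (hf_meas : Measurable fun p : EuclideanSpace ℝ (Fin n) × ℝ => f p.1 p.2)
    (hg_meas : Measurable fun p : EuclideanSpace ℝ (Fin n) × ℝ => g p.1 p.2)
    (hf_growth : ∀ (x : EuclideanSpace ℝ (Fin n)) (t : ℝ), 0 ≤ t →
      ‖f x t‖ ≤ K₁ * (1 + t)⁻¹ * ‖x‖)
    (hf_diss : ∀ (x : EuclideanSpace ℝ (Fin n)) (t : ℝ), 0 ≤ t →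
      ⟪x, f x t⟫ ≤ -K₁ * (1 + t)⁻¹ * ‖x‖ ^ 2)
    (hg_growth : ∀ (x : EuclideanSpace ℝ (Fin n)) (t : ℝ), 0 ≤ t →
      ‖g x t‖ ≤ C * (1 + t) ^ (-K₁))
    (k : ℕ) (Yk Yk1 : Ω → EuclideanSpace ℝ (Fin n))
    (hYk_meas : Measurable Yk)
    (hYk_sq : Integrable (fun ω => ‖Yk ω‖ ^ 2) P)
    (ΔB : Ω → ℝ) (hΔB_meas : Measurable ΔB)
    (hΔB_law : P.map ΔB = gaussianReal 0 ⟨Δt, hΔt.le⟩)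
    (hindep : IndepFun Yk ΔB P)
    (hstep : ∀ ω, Yk1 ω =
      Yk ω + Δt • f (Yk ω) ((k : ℝ) * Δt) + ΔB ω • g (Yk ω) ((k : ℝ) * Δt)) :
    ∫ ω, ‖Yk1 ω‖ ^ 2 ∂P ≤
      (1 - K₁ * Δt / (1 + (k : ℝ) * Δt)) ^ 2 * ∫ ω, ‖Yk ω‖ ^ 2 ∂P +
        C ^ 2 * Δt * (1 + (k : ℝ) * Δt) ^ (-(2 * K₁)) := by
  set t : ℝ := (k : ℝ) * Δt with htdef
  have ht : 0 ≤ t := by positivity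
  have ht1 : (0:ℝ) < 1 + t := by linarith
  -- measurability of sections
  have hfx : Measurable (fun x : EuclideanSpace ℝ (Fin n) => f x t) :=
    hf_meas.comp (measurable_id.prodMk measurable_const)
  have hgx : Measurable (fun x : EuclideanSpace ℝ (Fin n) => g x t) :=
    hg_meas.comp (measurable_id.prodMk measurable_const)
  set φ : EuclideanSpace ℝ (Fin n) → ℝ := fun x => ⟪x + Δt • f x t, g x t⟫ with hφdef
  have hφ : Measurable φ :=
    Measurable.inner (measurable_id.add (hfx.const_smul Δt)) hgx
  set ψ : EuclideanSpace ℝ (Fin n) → ℝ := fun x => ‖g x t‖ ^ 2 with hψdef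
  have hψ : Measurable ψ := hgx.norm.pow_const 2
  -- pointwise expansion of the square
  have hexp : ∀ ω, ‖Yk1 ω‖ ^ 2 =
      ‖Yk ω + Δt • f (Yk ω) t‖ ^ 2 + (2 * (φ (Yk ω) * ΔB ω) + ψ (Yk ω) * (ΔB ω) ^ 2) := by
    intro ω
    rw [hstep ω, norm_add_sq_real, real_inner_smul_right, norm_smul, Real.norm_eq_abs, mul_pow,
      sq_abs, hφdef, hψdef]
    ring
  -- gaussian facts
  have hvne : (⟨Δt, hΔt.le⟩ : ℝ≥0) ≠ 0 := fun h => hΔt.ne' (congrArg NNReal.toReal h)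
  have hBint : Integrable ΔB P := by
    have h := my_integrable_id_gauss hvne
    rw [← hΔB_law] at h
    exact (integrable_map_measure aestronglyMeasurable_id hΔB_meas.aemeasurable).mp h
  have hBmean : ∫ ω, ΔB ω ∂P = 0 := by
    have h := integral_map (μ := P) (φ := ΔB) (f := fun x : ℝ => x) hΔB_meas.aemeasurable
      aestronglyMeasurable_id
    rw [hΔB_law, my_integral_id_gauss hvne] at h
    exact h.symm
  have hB2int : Integrable (fun ω => (ΔB ω) ^ 2) P := by
    have h := my_integrable_sq_gauss hvne
    rw [← hΔB_law] at h
    exact (integrable_map_measure (measurable_id.pow_const 2).aestronglyMeasurable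
      hΔB_meas.aemeasurable).mp h
  have hB2 : ∫ ω, (ΔB ω) ^ 2 ∂P = Δt := by
    have h := integral_map (μ := P) (φ := ΔB) (f := fun x : ℝ => x ^ 2) hΔB_meas.aemeasurable
      (measurable_id.pow_const 2).aestronglyMeasurable
    rw [hΔB_law, my_integral_sq_gauss hvne] at h
    exact h.symm
  -- integrability of ‖Yk‖
  have hYknorm : Integrable (fun ω => ‖Yk ω‖) P := by
    refine (hYk_sq.add (integrable_const 1)).mono' hYk_meas.norm.aestronglyMeasurable
      (Filter.Eventually.of_forall fun ω => ?_)
    rw [Real.norm_eq_abs, abs_of_nonneg (norm_nonneg _)]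
    simp only [Pi.add_apply]
    nlinarith [norm_nonneg (Yk ω), sq_nonneg (‖Yk ω‖ - 1)]
  -- bound on φ
  have hinv1 : (1 + t)⁻¹ ≤ 1 := by
    rw [inv_le_one_iff₀]; right; linarith
  have hCg : (0:ℝ) ≤ C * (1 + t) ^ (-K₁) := by positivity
  set M : ℝ := (1 + K₁ * Δt) * (C * (1 + t) ^ (-K₁)) with hMdef
  have hφbound : ∀ x : EuclideanSpace ℝ (Fin n), |φ x| ≤ M * ‖x‖ := by
    intro x
    have h1 : |φ x| ≤ ‖x + Δt • f x t‖ * ‖g x t‖ := abs_real_inner_le_norm _ _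
    have h2 : ‖x + Δt • f x t‖ ≤ (1 + K₁ * Δt) * ‖x‖ := by
      refine (norm_add_le _ _).trans ?_
      rw [norm_smul, Real.norm_eq_abs, abs_of_pos hΔt]
      have h3 := hf_growth x t ht
      have h4 : K₁ * (1 + t)⁻¹ * ‖x‖ ≤ K₁ * ‖x‖ := by
        have := mul_le_of_le_one_right hK₁.le hinv1
        nlinarith [norm_nonneg x]
      nlinarith [norm_nonneg x, hΔt.le]
    have h5 : ‖g x t‖ ≤ C * (1 + t) ^ (-K₁) := hg_growth x t ht
    calc |φ x| ≤ ‖x + Δt • f x t‖ * ‖g x t‖ := h1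
      _ ≤ ((1 + K₁ * Δt) * ‖x‖) * (C * (1 + t) ^ (-K₁)) := by
          apply mul_le_mul h2 h5 (norm_nonneg _)
          positivity
      _ = M * ‖x‖ := by rw [hMdef]; ring
  have hMpos : (0:ℝ) ≤ M := by positivity
  have hφint : Integrable (fun ω => φ (Yk ω)) P := by
    refine (hYknorm.const_mul M).mono' ((hφ.comp hYk_meas).aestronglyMeasurable)
      (Filter.Eventually.of_forall fun ω => ?_)
    exact hφbound (Yk ω)
  -- cross term vanishes
  have hindφ : IndepFun (fun ω => φ (Yk ω)) ΔB P := hindep.comp hφ measurable_id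
  have hcrossint : Integrable (fun ω => φ (Yk ω) * ΔB ω) P :=
    hindφ.integrable_mul hφint hBint
  have hcross : ∫ ω, φ (Yk ω) * ΔB ω ∂P = 0 := by
    have h := hindφ.integral_mul_eq_mul_integral hφint.1 hBint.1
    rw [hBmean, mul_zero] at h
    exact h
  -- diffusion term
  have hψbound : ∀ x : EuclideanSpace ℝ (Fin n), ψ x ≤ (C * (1 + t) ^ (-K₁)) ^ 2 := by
    intro x
    have := hg_growth x t ht
    exact pow_le_pow_left₀ (norm_nonneg _) this 2
  have hψint : Integrable (fun ω => ψ (Yk ω)) P := by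
    refine (integrable_const ((C * (1 + t) ^ (-K₁)) ^ 2)).mono'
      ((hψ.comp hYk_meas).aestronglyMeasurable) (Filter.Eventually.of_forall fun ω => ?_)
    rw [Real.norm_eq_abs, abs_of_nonneg (sq_nonneg _)]
    exact hψbound (Yk ω)
  have hindψ : IndepFun (fun ω => ψ (Yk ω)) (fun ω => (ΔB ω) ^ 2) P :=
    hindep.comp hψ (measurable_id.pow_const 2)
  have hprodint : Integrable (fun ω => ψ (Yk ω) * (ΔB ω) ^ 2) P :=
    hindψ.integrable_mul hψint hB2int
  have hprod : ∫ ω, ψ (Yk ω) * (ΔB ω) ^ 2 ∂P = (∫ ω, ψ (Yk ω) ∂P) * Δt := by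
    have h := hindψ.integral_mul_eq_mul_integral hψint.1 hB2int.1
    rw [hB2] at h
    exact h
  have hψval : ∫ ω, ψ (Yk ω) ∂P ≤ (C * (1 + t) ^ (-K₁)) ^ 2 := by
    refine le_trans (integral_mono hψint (integrable_const _)
      (fun ω => hψbound (Yk ω))) ?_
    simp
  -- drift term
  have hAb : ∀ ω, ‖Yk ω + Δt • f (Yk ω) t‖ ^ 2 ≤
      (1 - K₁ * Δt / (1 + t)) ^ 2 * ‖Yk ω‖ ^ 2 := by
    intro ω
    set x := Yk ω
    have h1 := hf_diss x t ht
    have h2 := hf_growth x t ht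
    have h2' : ‖f x t‖ ^ 2 ≤ (K₁ * (1 + t)⁻¹ * ‖x‖) ^ 2 :=
      pow_le_pow_left₀ (norm_nonneg _) h2 2
    have hdiv : K₁ * Δt / (1 + t) = K₁ * (1 + t)⁻¹ * Δt := by
      rw [div_eq_mul_inv]; ring
    rw [norm_add_sq_real, real_inner_smul_right, norm_smul, Real.norm_eq_abs,
      abs_of_pos hΔt, mul_pow, hdiv]
    nlinarith [mul_le_mul_of_nonneg_left h1 (by positivity : (0:ℝ) ≤ 2 * Δt),
      mul_le_mul_of_nonneg_left h2' (sq_nonneg Δt)]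
  have hAmeas : AEStronglyMeasurable (fun ω => ‖Yk ω + Δt • f (Yk ω) t‖ ^ 2) P :=
    ((hYk_meas.add ((hfx.comp hYk_meas).const_smul Δt)).norm.pow_const 2).aestronglyMeasurable
  have hAint : Integrable (fun ω => ‖Yk ω + Δt • f (Yk ω) t‖ ^ 2) P := by
    refine (hYk_sq.const_mul ((1 - K₁ * Δt / (1 + t)) ^ 2)).mono' hAmeas
      (Filter.Eventually.of_forall fun ω => ?_)
    rw [Real.norm_eq_abs, abs_of_nonneg (sq_nonneg _)]
    exact hAb ω
  have hAval : ∫ ω, ‖Yk ω + Δt • f (Yk ω) t‖ ^ 2 ∂P ≤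
      (1 - K₁ * Δt / (1 + t)) ^ 2 * ∫ ω, ‖Yk ω‖ ^ 2 ∂P := by
    refine le_trans (integral_mono hAint (hYk_sq.const_mul _) (fun ω => hAb ω)) ?_
    rw [integral_const_mul]
  -- rpow algebra
  have hrpow : (C * (1 + t) ^ (-K₁)) ^ 2 = C ^ 2 * (1 + t) ^ (-(2 * K₁)) := by
    rw [mul_pow, ← Real.rpow_natCast ((1 + t) ^ (-K₁)) 2, ← Real.rpow_mul ht1.le]
    congr 1
    push_cast
    ring
  -- put everything together
  have hsplit : ∫ ω, ‖Yk1 ω‖ ^ 2 ∂P =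
      (∫ ω, ‖Yk ω + Δt • f (Yk ω) t‖ ^ 2 ∂P) +
        (2 * ∫ ω, φ (Yk ω) * ΔB ω ∂P + ∫ ω, ψ (Yk ω) * (ΔB ω) ^ 2 ∂P) := by
    have h2 : Integrable (fun ω => 2 * (φ (Yk ω) * ΔB ω) + ψ (Yk ω) * (ΔB ω) ^ 2) P :=
      (hcrossint.const_mul 2).add hprodint
    rw [integral_congr_ae (Filter.Eventually.of_forall hexp), integral_add hAint h2,
      integral_add (hcrossint.const_mul 2) hprodint, integral_const_mul]
  rw [hsplit, hcross, hprod]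
  have hfinal : (∫ ω, ψ (Yk ω) ∂P) * Δt ≤ C ^ 2 * Δt * (1 + t) ^ (-(2 * K₁)) := by
    calc (∫ ω, ψ (Yk ω) ∂P) * Δt ≤ (C * (1 + t) ^ (-K₁)) ^ 2 * Δt :=
          mul_le_mul_of_nonneg_right hψval hΔt.le
      _ = C ^ 2 * Δt * (1 + t) ^ (-(2 * K₁)) := by rw [hrpow]; ring
  linarith [hAval]
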